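/- Let U ∈ ℝ^{m×l}, let d ≥ 1, let n = max{m, l}·(d + 1), let A = φ_{n,d}(U), and let Δ ≥ 0. Suppose S ⊆ {1,…,n} satisfies |S| < d, and suppose there exists a vector x̂₁ ∈ Range([𝕀(S), A𝕀(S)]) with ‖x̂₁ − (𝟏_{md}ᵀ, 𝟎_{n−md}ᵀ)ᵀ‖₂² ≤ Δ. Then there exists y ∈ ℝˡ with ‖y‖₀ ≤ |S| and ‖U y − 𝟏_m‖₂² ≤ Δ. -/

import Mathlib

open Matrix

/-- The set of columns of a matrix `M`, as vectors of `ℝⁿ`. -/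
def cols {n q : ℕ} (M : Matrix (Fin n) (Fin q) ℝ) : Set (Fin n → ℝ) :=
  Set.range fun j i => M i j

/-- `𝕀(S)`: the diagonal `n×n` matrix whose `i`-th diagonal entry is `1` if `i ∈ S`
and `0` otherwise. -/
def actuate {n : ℕ} (S : Finset (Fin n)) : Matrix (Fin n) (Fin n) ℝ :=
  Matrix.diagonal fun i => if i ∈ S then 1 else 0

/-- `φ_{n,d}(M)`: the `n×n` matrix obtained by stacking `d` copies of the `m×l`
matrix `M` vertically in its top-right corner and filling all other entries
with zeros. -/
def phi (m l d n : ℕ) (M : Matrix (Fin m) (Fin l) ℝ) : Matrix (Fin n) (Fin n) ℝ :=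
  Matrix.of fun i j =>
    if (i : ℕ) < m * d ∧ n - l ≤ (j : ℕ) then
      if h : (i : ℕ) % m < m ∧ (j : ℕ) - (n - l) < l then M ⟨_, h.1⟩ ⟨_, h.2⟩ else 0
    else 0

lemma cols_eq_range_transpose {n q : ℕ} (M : Matrix (Fin n) (Fin q) ℝ) :
    cols M = Set.range Mᵀ := rfl

/-- let `d ≥ 1`, `n = max{m,l}·(d+1)`, `A = φ_{n,d}(U)` and `Δ ≥ 0`.
If `S ⊆ {1,…,n}` satisfies `|S| < d` and some `x̂₁ ∈ Range([𝕀(S), A𝕀(S)])` satisfies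
`‖x̂₁ − (𝟏_{md}ᵀ, 𝟎_{n−md}ᵀ)ᵀ‖₂² ≤ Δ`, then there exists `y ∈ ℝˡ` with `‖y‖₀ ≤ |S|`
and `‖U y − 𝟏_m‖₂² ≤ Δ`. -/
theorem sparse_solution_of_small_actuation
    (m l d : ℕ) (hd : 1 ≤ d) (U : Matrix (Fin m) (Fin l) ℝ)
    (n : ℕ) (hn : n = max m l * (d + 1))
    (A : Matrix (Fin n) (Fin n) ℝ) (hA : A = phi m l d n U)
    (Δ : ℝ) (hΔ : 0 ≤ Δ)
    (S : Finset (Fin n)) (hS : S.card < d)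
    (xhat : Fin n → ℝ)
    (hxhat : xhat ∈ Submodule.span ℝ (cols (actuate S) ∪ cols (A * actuate S)))
    (hclose : ∑ i : Fin n, (xhat i - if (i : ℕ) < m * d then (1 : ℝ) else 0) ^ 2 ≤ Δ) :
    ∃ y : Fin l → ℝ, (Finset.univ.filter fun k => y k ≠ 0).card ≤ S.card ∧
      ∑ i : Fin m, ((U *ᵥ y) i - 1) ^ 2 ≤ Δ := by
  rcases Nat.eq_zero_or_pos m with hm | hm
  · subst hm
    exact ⟨0, by simp, by simpa using hΔ⟩
  have hln : l ≤ n := by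
    have h1 : l ≤ max m l := Nat.le_max_right m l
    have h2 : max m l * 1 ≤ max m l * (d + 1) := Nat.mul_le_mul_left _ (by omega)
    omega
  have hmdn : m * d ≤ n := by
    have h1 : m * d ≤ max m l * (d + 1) :=
      Nat.mul_le_mul (Nat.le_max_left m l) (by omega)
    omega
  -- decompose xhat = z + A *ᵥ w with z, w supported on S
  rw [Submodule.span_union, Submodule.mem_sup] at hxhat
  obtain ⟨u, hu, v, hv, huv⟩ := hxhat
  rw [show cols (actuate S) = Set.range (actuate S).col from rfl, ← Matrix.range_mulVecLin] at hu
  rw [show cols (A * actuate S) = Set.range (A * actuate S).col from rfl, ← Matrix.range_mulVecLin] at hv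
  obtain ⟨a, ha⟩ := hu
  obtain ⟨b, hb⟩ := hv
  set z : Fin n → ℝ := actuate S *ᵥ a with hz
  set w : Fin n → ℝ := actuate S *ᵥ b with hw
  have hzw : xhat = fun i => z i + (A *ᵥ w) i := by
    funext i
    rw [← huv]
    have hv' : v = A *ᵥ w := by
      rw [hw, Matrix.mulVec_mulVec, ← hb]; rfl
    have hu' : u = z := by rw [hz, ← ha]; rfl
    rw [hv', hu']; rfl
  have hzS : ∀ i : Fin n, i ∉ S → z i = 0 := by
    intro i hi
    rw [hz, actuate, Matrix.mulVec_diagonal, if_neg hi, zero_mul]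
  have hwS : ∀ i : Fin n, i ∉ S → w i = 0 := by
    intro i hi
    rw [hw, actuate, Matrix.mulVec_diagonal, if_neg hi, zero_mul]
  -- find a block free of S
  have hT : ∃ k, k < d ∧ ∀ i ∈ S, (i : ℕ) / m ≠ k := by
    by_contra hcon
    push_neg at hcon
    have hsub : Finset.range d ⊆ S.image (fun i : Fin n => (i : ℕ) / m) := by
      intro k hk
      obtain ⟨i, hiS, hik⟩ := hcon k (Finset.mem_range.mp hk)
      exact Finset.mem_image.mpr ⟨i, hiS, hik⟩
    have h1 := Finset.card_le_card hsub
    rw [Finset.card_range] at h1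
    have h2 := Finset.card_image_le (s := S) (f := fun i : Fin n => (i : ℕ) / m)
    omega
  obtain ⟨k, hkd, hkS⟩ := hT
  have hkm : k * m + m ≤ m * d := by
    calc k * m + m = (k + 1) * m := by ring
    _ ≤ d * m := Nat.mul_le_mul_right _ (by omega)
    _ = m * d := Nat.mul_comm _ _
  have hin : ∀ r : Fin m, k * m + (r : ℕ) < n := by
    intro r; have := r.isLt; omega
  have hinmd : ∀ r : Fin m, k * m + (r : ℕ) < m * d := by
    intro r; have := r.isLt; omega
  -- the sparse vector
  set y : Fin l → ℝ := fun c => w ⟨n - l + c, by omega⟩ with hy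
  have he_inj : Function.Injective (fun c : Fin l => (⟨n - l + c, by omega⟩ : Fin n)) := by
    intro c1 c2 h
    have h2 : n - l + (c1 : ℕ) = n - l + (c2 : ℕ) := congrArg Fin.val h
    exact Fin.ext (by omega)
  refine ⟨y, ?_, ?_⟩
  · -- cardinality bound
    refine Finset.card_le_card_of_injOn (fun c => (⟨n - l + c, by omega⟩ : Fin n)) ?_ ?_
    · intro c hc
      replace hc : c ∈ Finset.univ ∧ y c ≠ 0 := by simpa using hc
      by_contra hcS
      exact hc.2 (hwS _ hcS)
    · exact fun c1 _ c2 _ h => he_inj h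
  · -- the error bound
    have key : ∀ r : Fin m, (U *ᵥ y) r = xhat ⟨k * m + r, hin r⟩ := by
      intro r
      set i : Fin n := ⟨k * m + r, hin r⟩ with hi
      have hiv : (i : ℕ) = k * m + r := rfl
      have hidiv : (i : ℕ) / m = k := by
        rw [hiv, Nat.add_comm, Nat.mul_comm, Nat.add_mul_div_left _ _ hm,
          Nat.div_eq_of_lt r.isLt, Nat.zero_add]
      have hiS : i ∉ S := fun h => hkS i h hidiv
      have himod : (i : ℕ) % m = r := by
        rw [hiv, Nat.add_comm, Nat.mul_comm, Nat.add_mul_mod_self_left,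
          Nat.mod_eq_of_lt r.isLt]
      have hilt : (i : ℕ) < m * d := hinmd r
      rw [hzw]
      simp only [hzS i hiS, zero_add]
      -- now compute (A *ᵥ w) i = (U *ᵥ y) r
      show (U *ᵥ y) r = (A *ᵥ w) i
      have hAe : ∀ c : Fin l, A i ⟨n - l + c, by omega⟩ = U r c := by
        intro c
        rw [hA]
        show phi m l d n U i ⟨n - l + c, by omega⟩ = U r c
        simp only [phi, Matrix.of_apply]
        rw [if_pos ⟨hilt, show n - l ≤ n - l + (c : ℕ) from Nat.le_add_right _ _⟩,
          dif_pos ⟨Nat.mod_lt _ hm,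
            show n - l + (c : ℕ) - (n - l) < l by omega⟩]
        congr 1
        · exact Fin.ext himod
        · exact Fin.ext (show n - l + (c : ℕ) - (n - l) = (c : ℕ) by omega)
      have hA0 : ∀ j : Fin n, (j : ℕ) < n - l → A i j = 0 := by
        intro j hj
        rw [hA]
        show phi m l d n U i j = 0
        simp only [phi, Matrix.of_apply]
        rw [if_neg (by omega)]
      show ∑ c : Fin l, U r c * y c = ∑ j : Fin n, A i j * w j
      have hzero : ∀ j ∈ Finset.univ, j ∉ (Finset.univ.map
          ⟨fun c : Fin l => (⟨n - l + c, by omega⟩ : Fin n), he_inj⟩) → A i j * w j = 0 := by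
        intro j _ hj
        simp only [Finset.mem_map, Finset.mem_univ, true_and,
          Function.Embedding.coeFn_mk] at hj
        have hjlt : (j : ℕ) < n - l := by
          by_contra hge
          push_neg at hge
          exact hj ⟨(⟨(j : ℕ) - (n - l), by omega⟩ : Fin l),
            Fin.ext (show n - l + ((j : ℕ) - (n - l)) = (j : ℕ) by omega)⟩
        rw [hA0 j hjlt, zero_mul]
      rw [← Finset.sum_subset (Finset.subset_univ _) hzero, Finset.sum_map]
      refine Finset.sum_congr rfl (fun c _ => ?_)
      simp only [Function.Embedding.coeFn_mk]
      rw [hAe c]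
    -- now sum bound
    set emb : Fin m ↪ Fin n := ⟨fun r => ⟨k * m + r, hin r⟩, by
      intro r1 r2 h
      have h2 : k * m + (r1 : ℕ) = k * m + (r2 : ℕ) := congrArg Fin.val h
      exact Fin.ext (by omega)⟩ with hemb
    calc ∑ r : Fin m, ((U *ᵥ y) r - 1) ^ 2
        = ∑ j ∈ Finset.univ.map emb, (xhat j - if (j : ℕ) < m * d then (1 : ℝ) else 0) ^ 2 := by
          rw [Finset.sum_map]
          refine Finset.sum_congr rfl (fun r _ => ?_)
          rw [key r]
          simp only [hemb, Function.Embedding.coeFn_mk]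
          show _ = (xhat ⟨k * m + r, hin r⟩ - if k * m + (r : ℕ) < m * d then (1 : ℝ) else 0) ^ 2
          rw [if_pos (show k * m + (r : ℕ) < m * d from hinmd r)]
      _ ≤ ∑ i : Fin n, (xhat i - if (i : ℕ) < m * d then (1 : ℝ) else 0) ^ 2 :=
          Finset.sum_le_sum_of_subset_of_nonneg (Finset.subset_univ _)
            (fun i _ _ => sq_nonneg _)
      _ ≤ Δ := hclose
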